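/- Let H be a monoid and x ∈ H an element of finite odd order m ≥ 3 with x^m = 1_H. Then for every n ≥ m, the subgroup X = {x^k : k ∈ ℕ} = ⟨x⟩ equals the setwise product of n copies of {1_H, x}. Consequently the set of factorization lengths of X in P_{fin,1}(H) contains all integers n ≥ m. -/
import Mathlib


open Pointwise

lemma pair_pow_eq_image {H : Type*} [Monoid H] [DecidableEq H] (x : H) :
    ∀ n : ℕ, ({(1 : H), x} : Finset H) ^ n = (Finset.range (n + 1)).image (fun k => x ^ k) := by
  intro n
  induction n with
  | zero => simp; rfl
  | succ n ih =>
    rw [pow_succ, ih]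
    ext a
    simp only [Finset.mem_mul, Finset.mem_image, Finset.mem_range, Finset.mem_insert,
      Finset.mem_singleton]
    constructor
    · rintro ⟨b, ⟨k, hk, rfl⟩, c, hc, rfl⟩
      rcases hc with rfl | rfl
      · exact ⟨k, by omega, by simp⟩
      · exact ⟨k + 1, by omega, by rw [pow_succ]⟩
    · rintro ⟨k, hk, rfl⟩
      rcases Nat.lt_or_ge k (n + 1) with h | h
      · exact ⟨x ^ k, ⟨k, h, rfl⟩, 1, Or.inl rfl, by simp⟩
      · have hk' : k = n + 1 := by omega
        subst hk'
        exact ⟨x ^ n, ⟨n, by omega, rfl⟩, x, Or.inr rfl, by rw [← pow_succ]⟩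

theorem pow_of_pair_eq_cyclic {H : Type*} [Monoid H] [DecidableEq H]
    (x : H) (m : ℕ) (hm : 3 ≤ m) (hodd : Odd m) (hxm : x ^ m = 1) :
    ∀ n : ℕ, m ≤ n →
      ({(1 : H), x} : Finset H) ^ n = (Finset.range m).image (fun k => x ^ k) := by
  intro n hn
  have hx : ∀ k : ℕ, x ^ k = x ^ (k % m) := by
    intro k
    conv_lhs => rw [← Nat.div_add_mod k m]
    rw [pow_add, pow_mul, hxm, one_pow, one_mul]
  rw [pair_pow_eq_image]
  ext a
  simp only [Finset.mem_image, Finset.mem_range]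
  constructor
  · rintro ⟨k, hk, rfl⟩
    exact ⟨k % m, Nat.mod_lt _ (by omega), (hx k).symm⟩
  · rintro ⟨k, hk, rfl⟩
    exact ⟨k, by omega, rfl⟩
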